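/- Let ε ∈ (0,1), N ≥ 1, and M the N×N symmetric circulant matrix with M_{i,j} = (ε^{d} + ε^{N-d})/(1-ε), d = (j-i) mod N. Then M is positive definite, so the quadratic form T ↦ Tᵀ M T is strictly convex on ℝ^N. -/

import Mathlib

open Finset

/-- Geometric sum identity. -/
private lemma geom_aux (ε : ℝ) (m : ℕ) :
    (1 - ε ^ 2) * ∑ s ∈ Finset.range m, (ε ^ 2) ^ s = 1 - (ε ^ 2) ^ m := by
  have h := geom_sum_mul (ε ^ 2) m
  ring_nf
  ring_nf at h
  linarith

/-- Key scalar identity. -/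
private lemma key_aux (ε : ℝ) (N d : ℕ) (hd : d < N) :
    (1 - ε ^ 2) * ∑ s ∈ Finset.range N, ε ^ (s + (s + d) % N)
      = (1 - ε ^ N) * (ε ^ d + ε ^ (N - d)) := by
  have hsplit : ∑ s ∈ Finset.range N, ε ^ (s + (s + d) % N)
      = ε ^ d * ∑ s ∈ Finset.range (N - d), (ε ^ 2) ^ s
        + ε ^ (N - d) * ∑ t ∈ Finset.range d, (ε ^ 2) ^ t := by
    rw [Finset.range_eq_Ico, ← Finset.sum_Ico_consecutive _ (Nat.zero_le (N - d)) (by omega),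
      ← Finset.range_eq_Ico, Finset.sum_Ico_eq_sum_range, Finset.mul_sum, Finset.mul_sum]
    congr 1
    · apply Finset.sum_congr rfl
      intro s hs
      simp only [Finset.mem_range] at hs
      rw [Nat.mod_eq_of_lt (by omega), ← pow_mul, ← pow_add]
      congr 1
      omega
    · have hnd : N - (N - d) = d := by omega
      rw [hnd]
      apply Finset.sum_congr rfl
      intro t ht
      simp only [Finset.mem_range] at ht
      have h1 : (N - d + t + d) % N = t := by
        have : N - d + t + d = N + t := by omega
        rw [this, Nat.add_mod_left, Nat.mod_eq_of_lt (by omega)]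
      rw [h1, ← pow_mul, ← pow_add]
      congr 1
      omega
  rw [hsplit]
  have g1 := geom_aux ε (N - d)
  have g2 := geom_aux ε d
  have hab : ε ^ d * ε ^ (N - d) = ε ^ N := by
    rw [← pow_add]; congr 1; omega
  have e1 : (ε ^ 2) ^ (N - d) = (ε ^ (N - d)) ^ 2 := by
    rw [← pow_mul, ← pow_mul]; ring_nf
  have e2 : (ε ^ 2) ^ d = (ε ^ d) ^ 2 := by
    rw [← pow_mul, ← pow_mul]; ring_nf
  rw [e1] at g1; rw [e2] at g2
  set a := ε ^ d
  set b := ε ^ (N - d)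
  calc (1 - ε ^ 2) * (a * ∑ s ∈ Finset.range (N - d), (ε ^ 2) ^ s
        + b * ∑ t ∈ Finset.range d, (ε ^ 2) ^ t)
      = a * ((1 - ε ^ 2) * ∑ s ∈ Finset.range (N - d), (ε ^ 2) ^ s)
        + b * ((1 - ε ^ 2) * ∑ t ∈ Finset.range d, (ε ^ 2) ^ t) := by ring
    _ = a * (1 - b ^ 2) + b * (1 - a ^ 2) := by rw [g1, g2]
    _ = (1 - ε ^ N) * (a + b) := by rw [← hab]; ring

/-- Strict convexity of a positive-definite double-sum quadratic form. -/
private lemma quad_strictConvexOn {n : Type*} [Fintype n] (M : Matrix n n ℝ)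
    (hpos : ∀ x : n → ℝ, x ≠ 0 → 0 < ∑ i, ∑ j, x i * M i j * x j) :
    StrictConvexOn ℝ (Set.univ : Set (n → ℝ))
      (fun x : n → ℝ => ∑ i, ∑ j, x i * M i j * x j) := by
  refine ⟨convex_univ, ?_⟩
  intro x _ y _ hxy a b ha hb hab
  have hb' : b = 1 - a := by linarith
  have hkey : ∑ i, ∑ j, (a • x + b • y) i * M i j * (a • x + b • y) j
      = a * (∑ i, ∑ j, x i * M i j * x j) + b * (∑ i, ∑ j, y i * M i j * y j)
        - a * b * (∑ i, ∑ j, (x - y) i * M i j * (x - y) j) := by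
    simp only [Finset.mul_sum, ← Finset.sum_sub_distrib, ← Finset.sum_add_distrib]
    apply Finset.sum_congr rfl; intro i _
    apply Finset.sum_congr rfl; intro j _
    simp only [Pi.add_apply, Pi.smul_apply, Pi.sub_apply, smul_eq_mul]
    subst hb'
    ring
  have hq := hpos (x - y) (sub_ne_zero.mpr hxy)
  simp only [smul_eq_mul]
  rw [hkey]
  nlinarith [mul_pos ha hb]

theorem circulant_posdef_strictconvex (N : ℕ) [NeZero N] (hN : 1 ≤ N) (ε : ℝ)
    (hε : 0 < ε) (hε1 : ε < 1)
    (M : Matrix (ZMod N) (ZMod N) ℝ)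
    (hM : ∀ i j : ZMod N, M i j = (ε ^ (j - i).val + ε ^ (N - (j - i).val)) / (1 - ε)) :
    M.PosDef ∧
      StrictConvexOn ℝ (Set.univ : Set (ZMod N → ℝ))
        (fun T : ZMod N → ℝ => ∑ i : ZMod N, ∑ j : ZMod N, T i * M i j * T j) := by
  have hεN : ε ^ N < 1 := pow_lt_one₀ hε.le hε1 (by omega)
  have h1ε : (0:ℝ) < 1 - ε := by linarith
  have h1εN : (0:ℝ) < 1 - ε ^ N := by linarith
  have h1ε2 : (0:ℝ) < 1 - ε ^ 2 := by nlinarith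
  set c : ℝ := (1 - ε ^ 2) / ((1 - ε) * (1 - ε ^ N)) with hc
  have hcpos : 0 < c := div_pos h1ε2 (mul_pos h1ε h1εN)
  -- the sum S i j over k of ε^((i-k).val) * ε^((j-k).val)
  have hS : ∀ i j : ZMod N,
      ∑ k : ZMod N, ε ^ (i - k).val * ε ^ (j - k).val
        = ∑ s ∈ Finset.range N, ε ^ (s + (s + (j - i).val) % N) := by
    intro i j
    rw [← (Equiv.subLeft i).sum_comp (fun k => ε ^ (i - k).val * ε ^ (j - k).val)]
    simp only [Equiv.subLeft_apply]
    have hterm : ∀ s : ZMod N,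
        ε ^ (i - (i - s)).val * ε ^ (j - (i - s)).val
          = ε ^ (s.val + (s.val + (j - i).val) % N) := by
      intro s
      have h1 : i - (i - s) = s := by ring
      have h2 : j - (i - s) = s + (j - i) := by ring
      rw [h1, h2, pow_add]
      congr 1
      rw [ZMod.val_add]
    rw [Finset.sum_congr rfl fun s _ => hterm s]
    -- now reindex ZMod N → range N via val
    refine Finset.sum_nbij' (fun s : ZMod N => s.val) (fun s : ℕ => (s : ZMod N))
      ?_ ?_ ?_ ?_ ?_
    · intro s _; simp [ZMod.val_lt]
    · intro s _; simp
    · intro s _; simp [ZMod.natCast_zmod_val]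
    · intro s hs; simp only [Finset.mem_range] at hs
      simp [ZMod.val_cast_of_lt hs]
    · intro s _; rfl
  -- M in terms of the factorized sum
  have hMc : ∀ i j : ZMod N,
      M i j = c * ∑ k : ZMod N, ε ^ (i - k).val * ε ^ (j - k).val := by
    intro i j
    have hd : (j - i).val < N := ZMod.val_lt _
    have hkey := key_aux ε N (j - i).val hd
    rw [hS i j] at *
    rw [hM i j]
    rw [hc]
    field_simp
    nlinarith [hkey]
  -- quadratic form identity
  have hQ : ∀ x : ZMod N → ℝ,
      ∑ i : ZMod N, ∑ j : ZMod N, x i * M i j * x j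
        = c * ∑ k : ZMod N, (∑ i : ZMod N, x i * ε ^ (i - k).val) ^ 2 := by
    intro x
    have h1 : ∀ i j : ZMod N, x i * M i j * x j
        = ∑ k : ZMod N, c * ((x i * ε ^ (i - k).val) * (x j * ε ^ (j - k).val)) := by
      intro i j
      rw [hMc i j, Finset.mul_sum, Finset.mul_sum, Finset.sum_mul]
      apply Finset.sum_congr rfl; intro k _; ring
    calc ∑ i : ZMod N, ∑ j : ZMod N, x i * M i j * x j
        = ∑ i : ZMod N, ∑ j : ZMod N, ∑ k : ZMod N,
            c * ((x i * ε ^ (i - k).val) * (x j * ε ^ (j - k).val)) := by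
          exact Finset.sum_congr rfl fun i _ => Finset.sum_congr rfl fun j _ => h1 i j
      _ = ∑ k : ZMod N, ∑ i : ZMod N, ∑ j : ZMod N,
            c * ((x i * ε ^ (i - k).val) * (x j * ε ^ (j - k).val)) := by
          rw [Finset.sum_congr rfl fun i (_ : i ∈ Finset.univ) =>
            (Finset.sum_comm : (∑ j : ZMod N, ∑ k : ZMod N,
              c * ((x i * ε ^ (i - k).val) * (x j * ε ^ (j - k).val))) = _),
            Finset.sum_comm]
      _ = c * ∑ k : ZMod N, (∑ i : ZMod N, x i * ε ^ (i - k).val) ^ 2 := by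
          rw [Finset.mul_sum]
          apply Finset.sum_congr rfl; intro k _
          rw [sq, Finset.sum_mul_sum, Finset.mul_sum]
          apply Finset.sum_congr rfl; intro i _
          rw [Finset.mul_sum]
  -- recurrence: from vanishing of all linear forms, x = 0
  have hrec : ∀ (x : ZMod N → ℝ) (k : ZMod N),
      (∑ i : ZMod N, x i * ε ^ (i - k).val) - ε * (∑ i : ZMod N, x i * ε ^ (i - (k + 1)).val)
        = (1 - ε ^ N) * x k := by
    intro x k
    rw [Finset.mul_sum, ← Finset.sum_sub_distrib]
    rw [Finset.sum_eq_single k]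
    · have h1 : (k - k) = (0 : ZMod N) := by ring
      have h2 : (k - (k + 1)) = (-1 : ZMod N) := by ring
      rw [h1, h2]
      have h3 : (-1 : ZMod N).val = N - 1 := by
        obtain ⟨m, rfl⟩ : ∃ m, N = m + 1 := ⟨N - 1, by omega⟩
        exact ZMod.val_neg_one m
      rw [h3, ZMod.val_zero]
      have h4 : ε * ε ^ (N - 1) = ε ^ N := by
        rw [← pow_succ']
        congr 1; omega
      linear_combination (-(x k)) * h4
    · intro i _ hik
      have hne : i - k ≠ 0 := fun h => hik (by
        have : i = k := by
          have := sub_eq_zero.mp h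
          exact this
        exact this)
      have hval : (i - k).val ≠ 0 := fun h => hne ((ZMod.val_eq_zero _).mp h)
      have hvlt : (i - k).val < N := ZMod.val_lt _
      have hstep : i - (k + 1) = (((i - k).val - 1 : ℕ) : ZMod N) := by
        have : ((i - k).val : ZMod N) = i - k := ZMod.natCast_zmod_val _
        push_cast [Nat.cast_sub (by omega : 1 ≤ (i - k).val)]
        rw [this]
        ring
      have hvstep : (i - (k + 1)).val = (i - k).val - 1 := by
        rw [hstep, ZMod.val_cast_of_lt (by omega)]
      rw [hvstep]
      have h5 : ε * ε ^ ((i - k).val - 1) = ε ^ (i - k).val := by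
        rw [← pow_succ']
        congr 1; omega
      linear_combination (-(x i)) * h5
    · intro h; exact absurd (Finset.mem_univ k) h
  -- positivity of the quadratic form
  have hpos : ∀ x : ZMod N → ℝ, x ≠ 0 →
      0 < ∑ i : ZMod N, ∑ j : ZMod N, x i * M i j * x j := by
    intro x hx
    rw [hQ x]
    apply mul_pos hcpos
    have hnonneg : ∀ k ∈ Finset.univ (α := ZMod N),
        (0:ℝ) ≤ (∑ i : ZMod N, x i * ε ^ (i - k).val) ^ 2 := fun k _ => sq_nonneg _
    rcases lt_or_eq_of_le (Finset.sum_nonneg hnonneg) with h | h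
    · exact h
    · exfalso
      have hzero : ∀ k : ZMod N, (∑ i : ZMod N, x i * ε ^ (i - k).val) = 0 := by
        intro k
        have := (Finset.sum_eq_zero_iff_of_nonneg hnonneg).mp h.symm k (Finset.mem_univ k)
        exact pow_eq_zero_iff (n := 2) (by norm_num) |>.mp this
      apply hx
      funext k
      have := hrec x k
      rw [hzero k, hzero (k + 1)] at this
      simp only [mul_zero, sub_zero] at this
      have : (1 - ε ^ N) * x k = 0 := by linarith
      have := mul_eq_zero.mp this.symm.symm
      rcases this with h' | h'
      · linarith
      · exact h'
  -- symmetry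
  have hsym : ∀ i j : ZMod N, M i j = M j i := by
    intro i j
    rw [hMc i j, hMc j i]
    congr 1
    apply Finset.sum_congr rfl
    intro k _
    ring
  constructor
  · constructor
    · ext i j
      simp only [Matrix.conjTranspose_apply, RCLike.star_def, starRingEnd_apply, star_trivial]
      exact (hsym i j).symm
    · intro x hx
      have := hpos x (fun h => hx (DFunLike.coe_injective (h.trans Finsupp.coe_zero.symm)))
      refine this.trans_eq (Eq.symm ?_)
      rw [Finsupp.sum_fintype _ _ (by simp)]
      apply Finset.sum_congr rfl; intro i _
      rw [Finsupp.sum_fintype _ _ (by simp)]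
      rfl
  · exact quad_strictConvexOn M hpos
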